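/- For p ∈ (0,1/2), q = 1-p and α ∈ [0,1), the function f(α) = log₂((1-α)/(1+α))·(1 - p/q) + 2·log₂(1 + (q-p)²·α) is nonincreasing on [0,1); equivalently its derivative satisfies -(2/q)·(q-p)/(1-α²) + 2(q-p)²/(1+(q-p)²α) ≤ -2p(q-p)(2 + 1/q) < 0 when p < 1/2. Consequently f(α) ≤ f(0) = 0 for all α ∈ [0,1). -/

import Mathlib

theorem f_alpha_nonincreasing (p q α : ℝ)
    (hp0 : 0 < p) (hp2 : p < 1/2) (hq : q = 1 - p)
    (hα : α ∈ Set.Ico (0:ℝ) 1) :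
    AntitoneOn (fun β : ℝ =>
        Real.logb 2 ((1-β)/(1+β)) * (1 - p/q)
          + 2 * Real.logb 2 (1 + (q-p)^2 * β)) (Set.Ico 0 1) ∧
    (-(2/q) * (q-p) / (1 - α^2) + 2*(q-p)^2 / (1 + (q-p)^2 * α)
        ≤ -2*p*(q-p)*(2 + 1/q)) ∧
    (-2*p*(q-p)*(2 + 1/q) < 0) ∧
    (Real.logb 2 ((1-α)/(1+α)) * (1 - p/q)
        + 2 * Real.logb 2 (1 + (q-p)^2 * α) ≤ 0) := by
  obtain ⟨hα0, hα1⟩ := hα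
  have hq0 : 0 < q := by rw [hq]; linarith
  have hs : 0 < q - p := by rw [hq]; linarith
  have hqne : q ≠ 0 := ne_of_gt hq0
  have hlog2 : 0 < Real.log 2 := Real.log_pos (by norm_num)
  -- key pointwise inequality
  have key : ∀ β : ℝ, 0 ≤ β → β < 1 →
      -(2/q) * (q-p) / (1 - β^2) + 2*(q-p)^2 / (1 + (q-p)^2 * β)
        ≤ -2*p*(q-p)*(2 + 1/q) := by
    intro β hβ0 hβ1
    have h1 : 0 < 1 - β^2 := by nlinarith
    have h2 : (1:ℝ) ≤ 1 + (q-p)^2 * β := by nlinarith [sq_nonneg (q-p)]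
    have hA : -(2/q) * (q-p) / (1 - β^2) ≤ -(2/q) * (q-p) := by
      rw [div_le_iff₀ h1]
      have hc : 0 ≤ 2/q * (q-p) := by positivity
      nlinarith [mul_nonneg hc (sq_nonneg β)]
    have hB : 2*(q-p)^2 / (1 + (q-p)^2 * β) ≤ 2*(q-p)^2 :=
      div_le_self (by positivity) h2
    have hE : -(2/q) * (q-p) + 2*(q-p)^2 = -2*p*(q-p)*(2 + 1/q) := by
      have h1p : (1:ℝ) - p ≠ 0 := by linarith
      rw [hq]; field_simp; ring
    linarith
  have hpart3 : -2*p*(q-p)*(2 + 1/q) < 0 := by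
    have h1 : 0 < 2 + 1/q := by positivity
    nlinarith [mul_pos (mul_pos hp0 hs) h1]
  -- derivative computation
  have hderiv : ∀ β ∈ Set.Ico (0:ℝ) 1,
      HasDerivAt (fun β : ℝ =>
        Real.logb 2 ((1-β)/(1+β)) * (1 - p/q)
          + 2 * Real.logb 2 (1 + (q-p)^2 * β))
      ((-(2/q) * (q-p) / (1 - β^2) + 2*(q-p)^2 / (1 + (q-p)^2 * β))
        / Real.log 2) β := by
    rintro β ⟨hβ0, hβ1⟩
    have hb1 : (0:ℝ) < 1 - β := by linarith
    have hb2 : (0:ℝ) < 1 + β := by linarith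
    have hb3 : (0:ℝ) < (1-β)/(1+β) := div_pos hb1 hb2
    have hb4 : (0:ℝ) < 1 + (q-p)^2*β := by nlinarith [sq_nonneg (q-p)]
    have hd1 : HasDerivAt (fun β : ℝ => (1-β)/(1+β))
        (((-1) * (1+β) - (1-β) * 1) / (1+β)^2) β := by
      have h : HasDerivAt (fun β : ℝ => (1-β)/(1+β))
          (((0-1)*(1+β) - (1-β)*(0+1))/(1+β)^2) β :=
        ((hasDerivAt_const β (1:ℝ)).sub (hasDerivAt_id β)).div
        ((hasDerivAt_const β (1:ℝ)).add (hasDerivAt_id β)) (ne_of_gt hb2)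
      convert h using 1
      norm_num
    have hd2 : HasDerivAt (fun β : ℝ => Real.log ((1-β)/(1+β)))
        ((((-1) * (1+β) - (1-β) * 1) / (1+β)^2) / ((1-β)/(1+β))) β :=
      hd1.log (ne_of_gt hb3)
    have hd3 : HasDerivAt (fun β : ℝ => 1 + (q-p)^2*β) ((q-p)^2) β := by
      exact ((hasDerivAt_const β 1).add
        ((hasDerivAt_id β).const_mul ((q-p)^2))).congr_deriv (by simp)
    have hd4 : HasDerivAt (fun β : ℝ => Real.log (1 + (q-p)^2*β))
        ((q-p)^2 / (1 + (q-p)^2*β)) β := hd3.log (ne_of_gt hb4)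
    have hd5 := ((hd2.div_const (Real.log 2)).mul_const (1 - p/q)).add
      ((hd4.div_const (Real.log 2)).const_mul 2)
    simp only [Real.logb]
    refine hd5.congr_deriv ?_
    have hβsq : (1:ℝ) - β^2 ≠ 0 := by nlinarith
    field_simp
    ring
  -- antitone
  have hanti : AntitoneOn (fun β : ℝ =>
      Real.logb 2 ((1-β)/(1+β)) * (1 - p/q)
        + 2 * Real.logb 2 (1 + (q-p)^2 * β)) (Set.Ico 0 1) := by
    apply antitoneOn_of_deriv_nonpos (convex_Ico 0 1)
    · intro x hx
      exact (hderiv x hx).continuousAt.continuousWithinAt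
    · intro x hx
      rw [interior_Ico] at hx
      exact (hderiv x ⟨le_of_lt hx.1, hx.2⟩).differentiableAt.differentiableWithinAt
    · intro x hx
      rw [interior_Ico] at hx
      rw [(hderiv x ⟨le_of_lt hx.1, hx.2⟩).deriv]
      apply div_nonpos_of_nonpos_of_nonneg _ hlog2.le
      have := key x (le_of_lt hx.1) hx.2
      linarith
  refine ⟨hanti, key α hα0 hα1, hpart3, ?_⟩
  have h0 : (fun β : ℝ =>
      Real.logb 2 ((1-β)/(1+β)) * (1 - p/q)
        + 2 * Real.logb 2 (1 + (q-p)^2 * β)) 0 = 0 := by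
    norm_num
  have := hanti (Set.mem_Ico.mpr ⟨le_refl 0, by norm_num⟩)
    (Set.mem_Ico.mpr ⟨hα0, hα1⟩) hα0
  simpa [h0] using this
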